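/- Let F = ⟨a,b⟩ be the free group of rank 2 and let (m_k)_{k≥1} be a sequence of integers such that: (i) for every integer n ≥ 1 the sequence of residues (m_k mod n) is eventually constant; and (ii) for every integer m there exists n ≥ 1 with m_k ≢ m (mod n) for all sufficiently large k. Then the set S = {a^{k!} b^{m_k} : k ≥ 1} is closed in the profinite topology of F. -/

import Mathlib

open scoped Pointwise

/-- A subset `C` of a group is closed in the profinite topology iff every point
outside `C` is separated from `C` by a coset of a finite-index normal subgroup. -/
def IsPTClosed {G : Type*} [Group G] (C : Set G) : Prop :=
  ∀ x : G, x ∉ C → ∃ N : Subgroup G, N.Normal ∧ N.FiniteIndex ∧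
    (x • (N : Set G)) ∩ C = ∅

/-- Any injective-on-`s` function extends to a permutation of a fintype. -/
lemma exists_perm_extend {X : Type*} [Fintype X] [DecidableEq X] (s : Finset X) (f : X → X)
    (hf : Set.InjOn f s) : ∃ σ : Equiv.Perm X, ∀ x ∈ s, σ x = f x := by
  classical
  set t : Finset X := s.image f with ht
  have hinj : Function.Injective (fun x : {x // x ∈ s} => (⟨f x.1, Finset.mem_image_of_mem f x.2⟩ : {x // x ∈ t})) := by
    rintro ⟨x, hx⟩ ⟨y, hy⟩ h
    simp only [Subtype.mk.injEq] at h
    exact Subtype.ext (hf hx hy h)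
  have hcard : Fintype.card {x // x ∈ s} = Fintype.card {x // x ∈ t} := by
    simp only [Fintype.card_coe, ht]
    exact (Finset.card_image_of_injOn hf).symm
  have hbij : Function.Bijective (fun x : {x // x ∈ s} => (⟨f x.1, Finset.mem_image_of_mem f x.2⟩ : {x // x ∈ t})) :=
    (Fintype.bijective_iff_injective_and_card _).2 ⟨hinj, hcard⟩
  let e1 : {x // x ∈ s} ≃ {x // x ∈ t} := Equiv.ofBijective _ hbij
  have hcard2 : Fintype.card {x // x ∉ s} = Fintype.card {x // x ∉ t} := by
    have h1 : Fintype.card {x // x ∉ s} = Fintype.card X - Fintype.card {x // x ∈ s} :=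
      Fintype.card_subtype_compl _
    have h2 : Fintype.card {x // x ∉ t} = Fintype.card X - Fintype.card {x // x ∈ t} :=
      Fintype.card_subtype_compl _
    rw [h1, h2, hcard]
  let e2 : {x // x ∉ s} ≃ {x // x ∉ t} := Fintype.equivOfCardEq hcard2
  refine ⟨((Equiv.sumCompl (· ∈ s)).symm.trans ((e1.sumCongr e2).trans (Equiv.sumCompl (· ∈ t)))), ?_⟩
  intro x hx
  simp only [Equiv.trans_apply]
  rw [Equiv.sumCompl_symm_apply_of_pos hx]
  simp [e1, Equiv.ofBijective]


theorem freeGroup_rf (w : FreeGroup (Fin 2)) (hw : w ≠ 1) :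
    ∃ N : Subgroup (FreeGroup (Fin 2)), N.Normal ∧ N.FiniteIndex ∧ w ∉ N := by
  classical
  set l : List (Fin 2 × Bool) := w.toWord with hl
  set L : ℕ := l.length with hL
  have hL1 : 1 ≤ L := by
    rcases Nat.eq_zero_or_pos L with h | h
    · exact absurd (FreeGroup.toWord_eq_nil_iff.1 (List.length_eq_zero_iff.1 h)) hw
    · exact h
  have hred : FreeGroup.reduce l = l := FreeGroup.reduce_toWord w
  -- no adjacent cancelling pair
  have hadj : ∀ (i : ℕ) (h : i + 1 < L) (g : Fin 2) (b : Bool),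
      l[i]'(by omega) = (g, b) → l[i+1]'h = (g, !b) → False := by
    intro i h g b h1 h2
    have hsplit : l = l.take i ++ (g, b) :: (g, !b) :: l.drop (i+2) := by
      conv_lhs => rw [← List.take_append_drop i l]
      congr 1
      rw [List.drop_eq_getElem_cons (l := l) (by omega), h1]
      congr 1
      rw [List.drop_eq_getElem_cons (l := l) (by omega), h2]
    exact FreeGroup.reduce.not (hred.trans hsplit)
  -- default letter
  set d : Fin 2 × Bool := (0, true) with hd
  -- constraint predicates on points of Fin (L+1)
  set A : Fin 2 → Fin (L+1) → Prop := fun g x => x.1 < L ∧ l.getD (L - 1 - x.1) d = (g, true) with hA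
  set B : Fin 2 → Fin (L+1) → Prop := fun g x => 1 ≤ x.1 ∧ l.getD (L - x.1) d = (g, false) with hB
  have hgetD : ∀ (i : ℕ) (h : i < L), l.getD i d = l[i]'(hL ▸ h) := fun i h => List.getD_eq_getElem l d (hL ▸ h)
  have hAB : ∀ g x, A g x → B g x → False := by
    intro g x hax hbx
    obtain ⟨h1, h2⟩ := hax
    obtain ⟨h3, h4⟩ := hbx
    rw [hgetD _ (by omega)] at h2
    rw [hgetD _ (by omega)] at h4
    refine hadj (L - 1 - x.1) (by omega) g true h2 ?_
    rw [Bool.not_true]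
    rw [List.getElem_eq_iff] at h4 ⊢
    convert h4 using 2
    omega
  set F : Fin 2 → Fin (L+1) → Fin (L+1) := fun g x =>
    if h : A g x then ⟨x.1 + 1, by have := h.1; omega⟩
    else if B g x then ⟨x.1 - 1, by omega⟩ else x with hF
  -- contradiction helper: A at x and B at x+2 force a cancelling pair
  have hcontra : ∀ (g : Fin 2) (x y : Fin (L+1)), A g x → B g y → y.1 = x.1 + 2 → False := by
    intro g x y hax hby hxy
    obtain ⟨h1, h2⟩ := hax
    obtain ⟨h3, h4⟩ := hby
    have hyL : y.1 < L + 1 := y.2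
    rw [hgetD _ (by omega)] at h2
    rw [hgetD _ (by omega)] at h4
    refine hadj (L - y.1) (by omega) g false h4 ?_
    rw [Bool.not_false]
    rw [List.getElem_eq_iff] at h2 ⊢
    convert h2 using 2
    omega
  set sg : Fin 2 → Finset (Fin (L+1)) := fun g => Finset.univ.filter (fun x => A g x ∨ B g x) with hsg
  have hinj : ∀ g : Fin 2, Set.InjOn (F g) (sg g) := by
    intro g x hx y hy hfxy
    have hx' : A g x ∨ B g x := by simpa [hsg] using hx
    have hy' : A g y ∨ B g y := by simpa [hsg] using hy
    by_cases hax : A g x <;> by_cases hay : A g y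
    · rw [hF] at hfxy
      simp only [dif_pos hax, dif_pos hay, Fin.mk.injEq] at hfxy
      exact Fin.ext (by omega)
    · have hby : B g y := hy'.resolve_left hay
      rw [hF] at hfxy
      simp only [dif_pos hax, dif_neg hay, if_pos hby, Fin.mk.injEq] at hfxy
      exact (hcontra g x y hax hby (by have := hby.1; omega)).elim
    · have hbx : B g x := hx'.resolve_left hax
      rw [hF] at hfxy
      simp only [dif_neg hax, dif_pos hay, if_pos hbx, Fin.mk.injEq] at hfxy
      exact (hcontra g y x hay hbx (by have := hbx.1; omega)).elim
    · have hbx : B g x := hx'.resolve_left hax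
      have hby : B g y := hy'.resolve_left hay
      rw [hF] at hfxy
      simp only [dif_neg hax, dif_neg hay, if_pos hbx, if_pos hby, Fin.mk.injEq] at hfxy
      have := hbx.1; have := hby.1
      exact Fin.ext (by omega)
  choose σ hσ using fun g => exists_perm_extend (sg g) (F g) (hinj g)
  have hstepA : ∀ (g : Fin 2) (x : Fin (L+1)) (h : A g x), σ g x = ⟨x.1 + 1, by have := h.1; omega⟩ := by
    intro g x h
    rw [hσ g x (by simp [hsg]; exact Or.inl h), hF]
    simp only [dif_pos h]
  have hstepB : ∀ (g : Fin 2) (x : Fin (L+1)) (h : B g x), σ g x = ⟨x.1 - 1, by omega⟩ := by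
    intro g x h
    have hna : ¬ A g x := fun ha => hAB g x ha h
    rw [hσ g x (by simp [hsg]; exact Or.inr h), hF]
    simp only [dif_neg hna, if_pos h]
  -- key computation: applying the image of a suffix of l to 0 gives its length
  have key : ∀ (t u : List (Fin 2 × Bool)) (h : u ++ t = l),
      (List.prod (t.map fun p => cond p.2 (σ p.1) (σ p.1)⁻¹)) ⟨0, by omega⟩ =
        ⟨t.length, by have := congrArg List.length h; simp at this; omega⟩ := by
    intro t
    induction t with
    | nil => intro u h; simp
    | cons p t ih =>
      intro u h
      obtain ⟨g, b⟩ := p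
      have h' : (u ++ [(g, b)]) ++ t = l := by simpa using h
      have hlen : u.length + 1 + t.length = L := by
        have := congrArg List.length h; simp at this; omega
      have hletter : l.getD u.length d = (g, b) := by
        rw [← h, List.getD_append_right u _ d u.length (le_refl _), Nat.sub_self]
        rfl
      rw [List.map_cons, List.prod_cons, Equiv.Perm.mul_apply, ih (u ++ [(g, b)]) h']
      simp only [List.length_cons]
      cases b with
      | true =>
        have hA1 : A g ⟨t.length, by omega⟩ := by
          constructor
          · simp only []; omega
          · have he : L - 1 - ((⟨t.length, by omega⟩ : Fin (L+1)) : ℕ) = u.length := by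
              simp only []; omega
            rw [he]; exact hletter
        simp only [cond_true]
        rw [hstepA g ⟨t.length, by omega⟩ hA1]
      | false =>
        have hB1 : B g ⟨t.length + 1, by omega⟩ := by
          constructor
          · simp only []; omega
          · have he : L - ((⟨t.length + 1, by omega⟩ : Fin (L+1)) : ℕ) = u.length := by
              simp only []; omega
            rw [he]; exact hletter
        simp only [cond_false]
        rw [Equiv.Perm.inv_def, Equiv.symm_apply_eq, hstepB g ⟨t.length + 1, by omega⟩ hB1]
        apply Fin.ext
        simp
  have hne : FreeGroup.lift σ w ≠ 1 := by
    have hw' : FreeGroup.lift σ w = (l.map fun p => cond p.2 (σ p.1) (σ p.1)⁻¹).prod := by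
      conv_lhs => rw [← FreeGroup.mk_toWord (x := w)]
      exact FreeGroup.lift_mk
    intro hcon
    have hk := key l [] rfl
    rw [← hw', hcon] at hk
    simp only [Equiv.Perm.one_apply, Fin.mk.injEq] at hk
    omega
  refine ⟨(FreeGroup.lift σ).ker, MonoidHom.normal_ker _, inferInstance, ?_⟩
  simpa [MonoidHom.mem_ker] using hne

/-- Let `F = ⟨a,b⟩` be the free group of rank 2 and `(m_k)_{k ≥ 1}` a sequence of
integers whose residues mod every `n ≥ 1` are eventually constant, and which is
eventually bounded away (mod some `n`) from every fixed integer.  Then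
`S = {a^{k!} b^{m_k} : k ≥ 1}` is closed in the profinite topology of `F`. -/
theorem closed_of_factorial_powers_times_profinite_divergent_powers
    (m : ℕ → ℤ)
    (hconst : ∀ n : ℤ, 1 ≤ n → ∃ r : ℤ, ∃ K : ℕ, ∀ k : ℕ, K ≤ k → 1 ≤ k → m k % n = r)
    (hdiv : ∀ c : ℤ, ∃ n : ℤ, 1 ≤ n ∧ ∃ K : ℕ, ∀ k : ℕ, K ≤ k → 1 ≤ k →
      ¬ m k ≡ c [ZMOD n]) :
    IsPTClosed {x : FreeGroup (Fin 2) | ∃ k : ℕ, 1 ≤ k ∧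
      x = (FreeGroup.of (0 : Fin 2)) ^ (Nat.factorial k) *
          (FreeGroup.of (1 : Fin 2)) ^ (m k)} := by
  classical
  intro x hx
  -- the abelianization homomorphism
  set φ : FreeGroup (Fin 2) →* Multiplicative (ℤ × ℤ) :=
    FreeGroup.lift (fun i => Multiplicative.ofAdd (if i = 0 then ((1:ℤ), (0:ℤ)) else ((0:ℤ), (1:ℤ)))) with hφ
  set B : ℤ := (Multiplicative.toAdd (φ x)).2 with hBdef
  obtain ⟨n, hn1, K, hK⟩ := hdiv B
  set n' : ℕ := n.toNat with hn'
  have hn'1 : 1 ≤ n' := by omega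
  haveI : NeZero n' := ⟨by omega⟩
  have hn'n : (n' : ℤ) = n := Int.toNat_of_nonneg (by omega)
  -- reduction mod n'
  set red : Multiplicative (ℤ × ℤ) →* Multiplicative (ZMod n' × ZMod n') :=
    AddMonoidHom.toMultiplicative ((Int.castAddHom (ZMod n')).prodMap (Int.castAddHom (ZMod n'))) with hred
  set ψ : FreeGroup (Fin 2) →* Multiplicative (ZMod n' × ZMod n') := red.comp φ with hψ
  have hcomm : ∀ v : FreeGroup (Fin 2),
      (Multiplicative.toAdd (ψ v)).2 = (((Multiplicative.toAdd (φ v)).2 : ℤ) : ZMod n') := fun v => rfl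
  have hcalc : ∀ k : ℕ,
      (Multiplicative.toAdd (φ ((FreeGroup.of (0 : Fin 2)) ^ (Nat.factorial k) *
        (FreeGroup.of (1 : Fin 2)) ^ (m k)))).2 = m k := by
    intro k
    rw [map_mul, map_pow, map_zpow, hφ, FreeGroup.lift_apply_of, FreeGroup.lift_apply_of]
    simp
  -- subgroups for small k from residual finiteness
  have hsmall : ∀ k : ℕ, ∃ N : Subgroup (FreeGroup (Fin 2)), N.Normal ∧ N.FiniteIndex ∧
      (1 ≤ k → x⁻¹ * ((FreeGroup.of (0 : Fin 2)) ^ (Nat.factorial k) *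
        (FreeGroup.of (1 : Fin 2)) ^ (m k)) ∉ N) := by
    intro k
    by_cases hk : 1 ≤ k
    · have hxne : x ≠ (FreeGroup.of (0 : Fin 2)) ^ (Nat.factorial k) *
          (FreeGroup.of (1 : Fin 2)) ^ (m k) := fun he => hx ⟨k, hk, he⟩
      have hne1 : x⁻¹ * ((FreeGroup.of (0 : Fin 2)) ^ (Nat.factorial k) *
          (FreeGroup.of (1 : Fin 2)) ^ (m k)) ≠ 1 := fun hcon => hxne (inv_mul_eq_one.mp hcon)
      obtain ⟨N, h1, h2, h3⟩ := freeGroup_rf _ hne1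
      exact ⟨N, h1, h2, fun _ => h3⟩
    · exact ⟨⊤, inferInstance, inferInstance, fun h => (hk h).elim⟩
  choose NN hN1 hN2 hN3 using hsmall
  haveI : Finite (Multiplicative (ZMod n' × ZMod n')) := inferInstance
  have hiInfNormal : (⨅ k : Fin K, NN k.1).Normal := by
    constructor
    intro a ha g
    rw [Subgroup.mem_iInf] at ha ⊢
    exact fun i => (hN1 i.1).conj_mem _ (ha i) g
  have hiInfFI : (⨅ k : Fin K, NN k.1).FiniteIndex :=
    Subgroup.finiteIndex_iInf fun i => hN2 i.1
  haveI := hiInfNormal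
  haveI := hiInfFI
  refine ⟨ψ.ker ⊓ ⨅ k : Fin K, NN k.1, inferInstance, inferInstance, ?_⟩
  rw [Set.eq_empty_iff_forall_notMem]
  rintro y ⟨hy1, hy2⟩
  obtain ⟨k, hk1, hk2⟩ := hy2
  obtain ⟨z, hz, hzy⟩ := Set.mem_smul_set.mp hy1
  rw [smul_eq_mul] at hzy
  have hzval : z = x⁻¹ * y := by rw [← hzy]; group
  have hz' : z ∈ ψ.ker ⊓ ⨅ k : Fin K, NN k.1 := hz
  rw [Subgroup.mem_inf] at hz'
  by_cases hkK : k < K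
  · exact hN3 k hk1 (by rw [← hk2, ← hzval]; exact Subgroup.mem_iInf.1 hz'.2 ⟨k, hkK⟩)
  · have hker : ψ z = 1 := hz'.1
    have hψeq : ψ x = ψ y := by
      have h1 : ψ (x⁻¹ * y) = 1 := by rw [← hzval]; exact hker
      rw [map_mul, map_inv] at h1
      exact inv_mul_eq_one.mp h1
    have h3 : ((B : ℤ) : ZMod n') = ((m k : ℤ) : ZMod n') := by
      have h2 := congrArg (fun w => (Multiplicative.toAdd w).2) hψeq
      rw [hcomm, hcomm] at h2
      rw [hk2, hcalc k] at h2
      exact h2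
    have h4 : m k ≡ B [ZMOD n] := by
      rw [← hn'n]
      exact ((ZMod.intCast_eq_intCast_iff _ _ _).mp h3.symm)
    exact hK k (by omega) hk1 h4
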